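/- Let P = conv(u_0, u_1, u_2, u_3, u_4) ⊆ ℝ^4 be a full-dimensional lattice simplex with lattice length l(P) ≥ 3. For each 0 ≤ i ≤ 4 define A_i = 1 − Σ_{j≠i} r_{ij,3}/(l_{ij} − r_{ij,3}). If A_i ≥ 0 for all 0 ≤ i ≤ 4, then P = ⋃_{i=0}^4 P_{i,3}. -/

import Mathlib

open Finset Pointwise

noncomputable section

/-- The real point corresponding to a lattice point. -/
def toR {n : ℕ} (v : Fin n → ℤ) : Fin n → ℝ := fun x => (v x : ℝ)

/-- The lattice simplex (as a subset of `ℝ^n`) with the given lattice vertices. -/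
def lsimplex {n m : ℕ} (u : Fin m → Fin n → ℤ) : Set (Fin n → ℝ) :=
  convexHull ℝ (Set.range fun i => toR (u i))

/-- The lattice length `l_{ij}` of the edge `u_i u_j`:
the gcd of the coordinates of `u_j - u_i`. -/
def latLen {n m : ℕ} (u : Fin m → Fin n → ℤ) (i j : Fin m) : ℕ :=
  Finset.univ.gcd fun x => (u j x - u i x).natAbs

/-- `r_{ij,k}`: the least nonnegative residue of `l_{ij}` modulo `k`. -/
def rmod {n m : ℕ} (u : Fin m → Fin n → ℤ) (i j : Fin m) (k : ℕ) : ℕ :=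
  latLen u i j % k

/-- The vertices of the `k`-dilation `P_{i,k}`: the vertex `u_i` together with, for `j ≠ i`,
the points `((l_{ij} - r_{ij,k})/l_{ij})·u_j + (r_{ij,k}/l_{ij})·u_i`. -/
def dilVert {n m : ℕ} (u : Fin m → Fin n → ℤ) (i : Fin m) (k : ℕ) (j : Fin m) :
    Fin n → ℝ :=
  if j = i then toR (u i)
  else
    ((((latLen u i j : ℝ) - (rmod u i j k : ℝ)) / (latLen u i j : ℝ)) • toR (u j))
      + (((rmod u i j k : ℝ) / (latLen u i j : ℝ)) • toR (u i))

/-- The `k`-dilation `P_{i,k}`. -/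
def dil {n m : ℕ} (u : Fin m → Fin n → ℤ) (i : Fin m) (k : ℕ) : Set (Fin n → ℝ) :=
  convexHull ℝ (Set.range (dilVert u i k))

/-- The primitive edge vector `ũ_{ij} = (u_j - u_i)/l_{ij}`. -/
def primVec {n m : ℕ} (u : Fin m → Fin n → ℤ) (i j : Fin m) : Fin n → ℝ :=
  (latLen u i j : ℝ)⁻¹ • (toR (u j) - toR (u i))

/-- The translated `k`-dilation `P_{i,k,t} = P_{i,k} + Σ_{j ≠ i} t_j ũ_{ij}`. -/
def dilT {n m : ℕ} (u : Fin m → Fin n → ℤ) (i : Fin m) (k : ℕ) (t : Fin m → ℕ) :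
    Set (Fin n → ℝ) :=
  (fun y => y + ∑ j ∈ Finset.univ.erase i, (t j : ℝ) • primVec u i j) '' dil u i k

lemma mem_convexHull_range_iff' {E : Type*} [AddCommGroup E] [Module ℝ E] {m : ℕ}
    (v : Fin m → E) (x : E) :
    x ∈ convexHull ℝ (Set.range v) ↔
      ∃ w : Fin m → ℝ, (∀ i, 0 ≤ w i) ∧ ∑ i, w i = 1 ∧ ∑ i, w i • v i = x := by
  rw [convexHull_range_eq_exists_affineCombination]
  constructor
  · rintro ⟨s, w, hw0, hw1, rfl⟩
    refine ⟨fun i => if i ∈ s then w i else 0, ?_, ?_, ?_⟩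
    · intro i; dsimp only; split
      · exact hw0 i ‹_›
      · exact le_refl 0
    · simp only [Finset.sum_ite_mem, univ_inter, hw1]
    · rw [affineCombination_eq_linear_combination s v w hw1]
      simp only [ite_smul, zero_smul, Finset.sum_ite_mem, univ_inter]
  · rintro ⟨w, hw0, hw1, rfl⟩
    exact ⟨univ, w, fun i _ => hw0 i, hw1,
      affineCombination_eq_linear_combination univ v w hw1⟩

lemma latLen_comm' {n m : ℕ} (u : Fin m → Fin n → ℤ) (i j : Fin m) :
    latLen u i j = latLen u j i := by
  unfold latLen
  congr 1; funext x; rw [← Int.natAbs_neg, neg_sub]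

lemma rmod_comm' {n m : ℕ} (u : Fin m → Fin n → ℤ) (i j : Fin m) (k : ℕ) :
    rmod u i j k = rmod u j i k := by
  unfold rmod; rw [latLen_comm']

/-- in dimension 4, if `A_i = 1 − Σ_{j≠i} r_{ij,3}/(l_{ij} − r_{ij,3}) ≥ 0`
for all `i`, then `P = ⋃_{i=0}^4 P_{i,3}`. -/
theorem dim4_cover_of_A_nonneg
    (u : Fin 5 → Fin 4 → ℤ)
    (hind : AffineIndependent ℝ fun i => toR (u i))
    (hlen : ∀ i j, i ≠ j → 3 ≤ latLen u i j)
    (A : Fin 5 → ℝ)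
    (hA : ∀ i, A i = 1 - ∑ j ∈ Finset.univ.erase i,
      (rmod u i j 3 : ℝ) / ((latLen u i j : ℝ) - (rmod u i j 3 : ℝ)))
    (hAnn : ∀ i, 0 ≤ A i) :
    lsimplex u = ⋃ i, dil u i 3 := by
  classical
  set v : Fin 5 → (Fin 4 → ℝ) := fun i => toR (u i) with hv
  set ρ : Fin 5 → Fin 5 → ℝ :=
    fun i j => (rmod u i j 3 : ℝ) / ((latLen u i j : ℝ) - (rmod u i j 3 : ℝ)) with hρ
  have hcast : ∀ i j : Fin 5, i ≠ j →
      (0:ℝ) < (latLen u i j : ℝ) ∧ (rmod u i j 3 : ℝ) < (latLen u i j : ℝ) ∧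
        (0:ℝ) ≤ (rmod u i j 3 : ℝ) := by
    intro i j hij
    have h3 : 3 ≤ latLen u i j := hlen i j hij
    have hr : rmod u i j 3 < latLen u i j :=
      lt_of_lt_of_le (Nat.mod_lt _ (by norm_num)) h3
    exact ⟨by exact_mod_cast lt_of_lt_of_le (by norm_num) h3, by exact_mod_cast hr,
      by positivity⟩
  have hρnn : ∀ i j : Fin 5, i ≠ j → 0 ≤ ρ i j := by
    intro i j hij
    obtain ⟨h1, h2, h3⟩ := hcast i j hij
    exact div_nonneg h3 (by linarith)
  have hρcomm : ∀ i j : Fin 5, ρ i j = ρ j i := by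
    intro i j; simp only [hρ, latLen_comm' u i j, rmod_comm' u i j]
  apply Set.Subset.antisymm
  · -- hard direction
    intro x hx
    rw [lsimplex, mem_convexHull_range_iff'] at hx
    obtain ⟨w, hw0, hw1, hwx⟩ := hx
    -- find a good vertex i
    have key : ∃ i : Fin 5, ∑ j ∈ univ.erase i, w j * ρ i j ≤ w i := by
      by_contra hcon
      push_neg at hcon
      have h1 : (1:ℝ) < ∑ i, ∑ j ∈ univ.erase i, w j * ρ i j := by
        calc (1:ℝ) = ∑ i, w i := hw1.symm
        _ < _ := Finset.sum_lt_sum_of_nonempty univ_nonempty (fun i _ => hcon i)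
      have hswap : ∑ i, ∑ j ∈ univ.erase i, w j * ρ i j
          = ∑ j, ∑ i ∈ univ.erase j, w j * ρ i j := by
        apply Finset.sum_comm'
        intro i j
        simp [mem_erase, ne_comm, and_comm]
      have h2 : ∀ j : Fin 5, ∑ i ∈ univ.erase j, w j * ρ i j = w j * (1 - A j) := by
        intro j
        rw [← Finset.mul_sum]
        congr 1
        have : ∑ i ∈ univ.erase j, ρ i j = ∑ i ∈ univ.erase j, ρ j i :=
          Finset.sum_congr rfl fun i _ => hρcomm i j
        rw [this, hA j]; ring
      have h3 : ∑ j, ∑ i ∈ univ.erase j, w j * ρ i j ≤ 1 := by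
        calc ∑ j, ∑ i ∈ univ.erase j, w j * ρ i j = ∑ j, w j * (1 - A j) :=
              Finset.sum_congr rfl fun j _ => h2 j
        _ ≤ ∑ j, w j := Finset.sum_le_sum (fun j _ => by nlinarith [hw0 j, hAnn j])
        _ = 1 := hw1
      rw [hswap] at h1; linarith
    obtain ⟨i, hi⟩ := key
    rw [Set.mem_iUnion]
    refine ⟨i, ?_⟩
    rw [dil, mem_convexHull_range_iff']
    set S : ℝ := ∑ j ∈ univ.erase i, w j * ρ i j with hS
    refine ⟨fun j => if j = i then w i - S
      else w j * ((latLen u i j : ℝ) / ((latLen u i j : ℝ) - (rmod u i j 3 : ℝ))),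
      ?_, ?_, ?_⟩
    · intro j; dsimp only; split
      · linarith
      · rename_i hji
        obtain ⟨h1, h2, h3⟩ := hcast i j (Ne.symm hji)
        have : (0:ℝ) ≤ (latLen u i j : ℝ) / ((latLen u i j : ℝ) - (rmod u i j 3 : ℝ)) :=
          div_nonneg h1.le (by linarith)
        exact mul_nonneg (hw0 j) this
    · rw [← Finset.add_sum_erase _ _ (mem_univ i)]
      rw [if_pos rfl]
      have hrow : ∀ j ∈ univ.erase i,
          (if j = i then w i - S
            else w j * ((latLen u i j : ℝ) / ((latLen u i j : ℝ) - (rmod u i j 3 : ℝ))))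
          = w j + w j * ρ i j := by
        intro j hj
        have hji : j ≠ i := (mem_erase.1 hj).1
        rw [if_neg hji]
        obtain ⟨h1, h2, h3⟩ := hcast i j (Ne.symm hji)
        have hne : (latLen u i j : ℝ) - (rmod u i j 3 : ℝ) ≠ 0 := by linarith
        simp only [hρ]
        field_simp
        ring
      rw [Finset.sum_congr rfl hrow, Finset.sum_add_distrib, ← hS]
      have hw' : w i + ∑ j ∈ univ.erase i, w j = 1 := by
        rw [Finset.add_sum_erase _ w (mem_univ i)]; exact hw1
      linarith
    · rw [← Finset.add_sum_erase _ _ (mem_univ i)]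
      beta_reduce
      rw [if_pos rfl]
      have hrow : ∀ j ∈ univ.erase i,
          (if j = i then w i - S
            else w j * ((latLen u i j : ℝ) / ((latLen u i j : ℝ) - (rmod u i j 3 : ℝ))))
            • dilVert u i 3 j
          = w j • v j + (w j * ρ i j) • v i := by
        intro j hj
        have hji : j ≠ i := (mem_erase.1 hj).1
        rw [if_neg hji, dilVert, if_neg hji]
        obtain ⟨h1, h2, h3⟩ := hcast i j (Ne.symm hji)
        have hne : (latLen u i j : ℝ) - (rmod u i j 3 : ℝ) ≠ 0 := by linarith
        rw [smul_add, smul_smul, smul_smul]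
        congr 1
        · congr 1; field_simp
        · congr 1; simp only [hρ]; field_simp
      rw [Finset.sum_congr rfl hrow, Finset.sum_add_distrib, ← Finset.sum_smul, ← hS]
      rw [dilVert, if_pos rfl]
      have : (w i - S) • (toR (u i)) + ((∑ j ∈ univ.erase i, w j • v j) + S • v i)
          = w i • v i + ∑ j ∈ univ.erase i, w j • v j := by
        have : toR (u i) = v i := rfl
        rw [this, sub_smul]
        abel
      rw [this, Finset.add_sum_erase _ (fun j => w j • v j) (mem_univ i)]
      exact hwx
  · -- easy direction
    intro x hx
    rw [Set.mem_iUnion] at hx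
    obtain ⟨i, hx⟩ := hx
    have hconv : Convex ℝ (lsimplex u) := convex_convexHull ℝ _
    have hmem : ∀ j : Fin 5, toR (u j) ∈ lsimplex u := fun j =>
      subset_convexHull ℝ (Set.range fun i => toR (u i)) ⟨j, rfl⟩
    refine convexHull_min ?_ hconv hx
    rintro _ ⟨j, rfl⟩
    by_cases hj : j = i
    · rw [dilVert, if_pos hj]
      exact hmem i
    · rw [dilVert, if_neg hj]
      obtain ⟨h1, h2, h3⟩ := hcast i j (Ne.symm hj)
      have ha : (0:ℝ) ≤ ((latLen u i j : ℝ) - (rmod u i j 3 : ℝ)) / (latLen u i j : ℝ) :=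
        div_nonneg (by linarith) h1.le
      have hb : (0:ℝ) ≤ (rmod u i j 3 : ℝ) / (latLen u i j : ℝ) := div_nonneg h3 h1.le
      have hab : ((latLen u i j : ℝ) - (rmod u i j 3 : ℝ)) / (latLen u i j : ℝ)
          + (rmod u i j 3 : ℝ) / (latLen u i j : ℝ) = 1 := by
        field_simp
        ring
      exact hconv (hmem j) (hmem i) ha hb hab
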